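/- For p ∈ (0,1), the sequence defined by v_0 ≥ 0 and v_{n+1} = v_n + (1-p)^{v_n}/p satisfies v_n·|log(1-p)|/log n → 1 as n → ∞, and moreover n·(1-p)^{v_n} → p/|log(1-p)|. -/

import Mathlib

open Filter Real

/-- For `p ∈ (0,1)`, the sequence `v_0 ≥ 0`, `v_{n+1} = v_n + (1-p)^{v_n}/p` satisfies
`v_n |log(1-p)| / log n → 1` and `n (1-p)^{v_n} → p/|log(1-p)|`. -/
theorem stmt_18 (p : ℝ) (hp : p ∈ Set.Ioo (0 : ℝ) 1) (v : ℕ → ℝ) (hv0 : 0 ≤ v 0)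
    (hrec : ∀ n, v (n + 1) = v n + (1 - p) ^ (v n) / p) :
    Tendsto (fun n : ℕ => v n * |Real.log (1 - p)| / Real.log n) atTop (nhds 1) ∧
    Tendsto (fun n : ℕ => (n : ℝ) * (1 - p) ^ (v n)) atTop
      (nhds (p / |Real.log (1 - p)|)) := by
  obtain ⟨hp0, hp1⟩ := hp
  have h1p : (0:ℝ) < 1 - p := by linarith
  have h1p1 : (1:ℝ) - p < 1 := by linarith
  have hlogneg : Real.log (1 - p) < 0 := Real.log_neg h1p h1p1
  set c : ℝ := -Real.log (1 - p) with hc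
  have hcpos : 0 < c := by rw [hc]; linarith
  have habs : |Real.log (1 - p)| = c := abs_of_neg hlogneg
  -- definitions
  set w : ℕ → ℝ := fun n => (1 - p) ^ (v n) with hwdef
  set u : ℕ → ℝ := fun n => Real.exp (c * v n) with hudef
  have hwexp : ∀ n, w n = Real.exp (-(c * v n)) := by
    intro n
    show (1 - p) ^ (v n) = _
    rw [Real.rpow_def_of_pos h1p, hc]
    ring_nf
  have hw_pos : ∀ n, 0 < w n := fun n => by rw [hwexp]; exact Real.exp_pos _
  have hu_pos : ∀ n, 0 < u n := fun n => Real.exp_pos _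
  have huw : ∀ n, u n * w n = 1 := by
    intro n
    rw [hwexp]
    show Real.exp _ * _ = 1
    rw [← Real.exp_add]
    simp
  have hwinv : ∀ n, w n = (u n)⁻¹ := fun n => eq_inv_of_mul_eq_one_left
    (by rw [mul_comm]; exact huw n)
  have hv_nonneg : ∀ n, 0 ≤ v n := by
    intro n
    induction n with
    | zero => exact hv0
    | succ k ih =>
      rw [hrec k]
      have hpw : 0 < (1 - p) ^ (v k) := hw_pos k
      have : 0 < (1 - p) ^ (v k) / p := div_pos hpw hp0
      linarith
  have hu_ge1 : ∀ n, 1 ≤ u n := by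
    intro n
    show (1:ℝ) ≤ Real.exp _
    rw [← Real.exp_zero]
    exact Real.exp_le_exp.mpr (mul_nonneg hcpos.le (hv_nonneg n))
  set x : ℕ → ℝ := fun n => c * w n / p with hxdef
  have hx_pos : ∀ n, 0 < x n := fun n => div_pos (mul_pos hcpos (hw_pos n)) hp0
  have hu_rec : ∀ n, u (n + 1) = u n * Real.exp (x n) := by
    intro n
    show Real.exp (c * v (n+1)) = Real.exp (c * v n) * Real.exp (c * w n / p)
    rw [← Real.exp_add, hrec n]
    congr 1
    show c * (v n + w n / p) = _
    ring
  have hstep : ∀ n, u n + c / p ≤ u (n + 1) := by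
    intro n
    rw [hu_rec n]
    have h1 : x n + 1 ≤ Real.exp (x n) := Real.add_one_le_exp _
    have h2 : u n * (x n + 1) ≤ u n * Real.exp (x n) :=
      mul_le_mul_of_nonneg_left h1 (hu_pos n).le
    have h3 : u n * (x n + 1) = u n + c / p := by
      have := huw n
      show u n * (c * w n / p + 1) = _
      field_simp
      nlinarith [huw n]
    linarith
  have hu_lb : ∀ n : ℕ, 1 + n * (c / p) ≤ u n := by
    intro n
    induction n with
    | zero => simpa using hu_ge1 0
    | succ k ih =>
      have := hstep k
      push_cast
      push_cast at ih
      linarith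
  have hu_top : Tendsto u atTop atTop := by
    refine tendsto_atTop_mono hu_lb ?_
    have h1 : Tendsto (fun n : ℕ => (n:ℝ) * (c / p)) atTop atTop :=
      Tendsto.atTop_mul_const (div_pos hcpos hp0) tendsto_natCast_atTop_atTop
    exact tendsto_atTop_add_const_left _ 1 h1
  have hw0 : Tendsto w atTop (nhds 0) :=
    (hu_top.inv_tendsto_atTop).congr (fun n => (hwinv n).symm)
  have hx0 : Tendsto x atTop (nhds 0) := by
    have := hw0.const_mul (c / p)
    simp only [mul_zero] at this
    exact this.congr (fun n => by show c / p * w n = c * w n / p; ring)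
  have hslope : Tendsto (fun t => (Real.exp t - 1) / t) (nhdsWithin 0 {(0:ℝ)}ᶜ) (nhds 1) := by
    have h := hasDerivAt_iff_tendsto_slope.mp (Real.hasDerivAt_exp 0)
    simp only [Real.exp_zero] at h
    refine h.congr (fun t => ?_)
    simp [slope_def_field]
  have hxne : Tendsto x atTop (nhdsWithin 0 {(0:ℝ)}ᶜ) := by
    refine tendsto_nhdsWithin_of_tendsto_nhds_of_eventually_within _ hx0 ?_
    exact Eventually.of_forall fun n => (hx_pos n).ne'
  have hcomp : Tendsto (fun n => (Real.exp (x n) - 1) / x n) atTop (nhds 1) :=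
    hslope.comp hxne
  have hd : Tendsto (fun n => u (n + 1) - u n) atTop (nhds (c / p)) := by
    have h1 := hcomp.const_mul (c / p)
    simp only [mul_one] at h1
    refine h1.congr (fun n => ?_)
    rw [hu_rec n]
    have hxeq : x n = c * w n / p := rfl
    have h2 : c / p * ((Real.exp (x n) - 1) / x n) = (Real.exp (x n) - 1) * (w n)⁻¹ := by
      rw [hxeq]
      field_simp
    rw [h2, hwinv n, inv_inv]
    ring
  have hcesaro := hd.cesaro
  have h3 : Tendsto (fun n : ℕ => (u n - u 0) / n) atTop (nhds (c / p)) := by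
    refine hcesaro.congr (fun n => ?_)
    rw [Finset.sum_range_sub, inv_mul_eq_div]
  have h4 : Tendsto (fun n : ℕ => u 0 / n) atTop (nhds 0) :=
    tendsto_const_div_atTop_nhds_zero_nat (u 0)
  have hquot : Tendsto (fun n : ℕ => u n / n) atTop (nhds (c / p)) := by
    have := h3.add h4
    rw [add_zero] at this
    refine this.congr (fun n => ?_)
    rw [← add_div, sub_add_cancel]
  have hcp : (0:ℝ) < c / p := div_pos hcpos hp0
  constructor
  · -- first limit
    have hlogquot : Tendsto (fun n : ℕ => Real.log (u n / n)) atTop (nhds (Real.log (c / p))) :=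
      ((Real.continuousAt_log hcp.ne').tendsto).comp hquot
    have hloginv : Tendsto (fun n : ℕ => (Real.log n)⁻¹) atTop (nhds 0) :=
      tendsto_inv_atTop_zero.comp (Real.tendsto_log_atTop.comp tendsto_natCast_atTop_atTop)
    have h6 : Tendsto (fun n : ℕ => Real.log (u n / n) * (Real.log n)⁻¹ + 1) atTop (nhds 1) := by
      have := (hlogquot.mul hloginv).add (tendsto_const_nhds (x := (1:ℝ)))
      simpa using this
    refine Tendsto.congr' ?_ h6
    filter_upwards [eventually_ge_atTop 2] with n hn
    have hn1 : (1:ℝ) < n := by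
      have : (2:ℝ) ≤ n := by exact_mod_cast hn
      linarith
    have hlogn : 0 < Real.log n := Real.log_pos hn1
    have hlogu : Real.log (u n) = c * v n := Real.log_exp _
    have hld : Real.log (u n / n) = c * v n - Real.log n := by
      rw [Real.log_div (hu_pos n).ne' (by positivity), hlogu]
    rw [habs, hld]
    field_simp
    ring
  · -- second limit
    have h5 := hquot.inv₀ hcp.ne'
    rw [inv_div] at h5
    rw [habs]
    refine h5.congr (fun n => ?_)
    rw [inv_div, div_eq_mul_inv, ← hwinv n]
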